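/- Separation-distance upper bound for biased one-sided transposition shuffles with α ≤ 0: for every real α ≤ 0, every n ≥ 1, every real c > 0, and every natural number t with t ≥ (N_α(n)/n^α)·(log n + c), we have sep(OST_{n,α}^t) = max_{σ∈S_n} (1 − n!·OST_{n,α}^t(σ)) ≤ e^{−c}. -/

import Mathlib

open scoped BigOperators


/-- Convolution of two distributions on `S_n`: `(P ⋆ Q)(g) = ∑_h P(g h⁻¹) Q(h)`. -/
noncomputable def convol {n : ℕ} (P Q : Equiv.Perm (Fin n) → ℝ) :
    Equiv.Perm (Fin n) → ℝ :=
  fun g => ∑ h : Equiv.Perm (Fin n), P (g * h⁻¹) * Q h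

/-- `convPow P t` is the `t`-fold convolution `P^t` of `P` with itself. -/
noncomputable def convPow {n : ℕ} (P : Equiv.Perm (Fin n) → ℝ) :
    ℕ → Equiv.Perm (Fin n) → ℝ
  | 0 => fun g => if g = 1 then 1 else 0
  | t + 1 => convol P (convPow P t)

/-- `N_α(n) = ∑_{j=1}^n j^α`. -/
noncomputable def Nalpha (α : ℝ) (n : ℕ) : ℝ := ∑ j ∈ Finset.Icc 1 n, (j : ℝ) ^ α

/-- The biased one-sided transposition shuffle on `S_n` with weight `w(j) = j^α`:
`OSTb n α σ = j^{α−1}/N_α(n)` if `σ = (i j)` with `1 ≤ i < j ≤ n` (positions are the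
elements of `Fin n`, so position `j` carries weight `(j+1)^{α−1}/N_α(n)`),
`OSTb n α 1 = (∑_{j=1}^n j^{α−1})/N_α(n)`, and `0` otherwise. -/
noncomputable def OSTb (n : ℕ) (α : ℝ) : Equiv.Perm (Fin n) → ℝ := fun σ =>
  ∑ j : Fin n, ∑ i : Fin n,
    if i ≤ j ∧ σ = Equiv.swap i j then (((j : ℕ) : ℝ) + 1) ^ (α - 1) / Nalpha α n else 0


/-- The separation distance of `P` from the uniform distribution on `S_n`:
`sep(P) = max_{σ∈S_n} (1 − n!·P(σ))`, written as a supremum over `S_n`. -/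
noncomputable def sepDist {n : ℕ} (P : Equiv.Perm (Fin n) → ℝ) : ℝ :=
  ⨆ σ : Equiv.Perm (Fin n), (1 - (Nat.factorial n : ℝ) * P σ)

namespace OSTaux

open Finset Equiv Equiv.Perm

variable {n : ℕ}

/-- normalized uniform measure on swaps with right hand `j`. -/
noncomputable def q (j : Fin n) : Equiv.Perm (Fin n) → ℝ := fun σ =>
  ∑ i : Fin n, if i ≤ j ∧ σ = Equiv.swap i j then 1 / (((j : ℕ) : ℝ) + 1) else 0

/-- point mass at the identity. -/
noncomputable def dd (n : ℕ) : Equiv.Perm (Fin n) → ℝ := fun g => if g = 1 then 1 else 0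

/-- uniform measure on the subgroup of permutations fixing all positions `≥ K`. -/
noncomputable def uu (n K : ℕ) : Equiv.Perm (Fin n) → ℝ := fun σ =>
  if ∀ m : Fin n, K ≤ (m : ℕ) → σ m = m then 1 / (Nat.factorial K : ℝ) else 0

lemma q_nonneg (j : Fin n) (g : Equiv.Perm (Fin n)) : 0 ≤ q j g := by
  refine Finset.sum_nonneg fun i _ => ?_
  split <;> positivity

lemma convol_nonneg {P Q : Equiv.Perm (Fin n) → ℝ} (hP : ∀ g, 0 ≤ P g)
    (hQ : ∀ g, 0 ≤ Q g) (g : Equiv.Perm (Fin n)) : 0 ≤ convol P Q g :=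
  Finset.sum_nonneg fun h _ => mul_nonneg (hP _) (hQ _)

lemma sum_translate (f : Equiv.Perm (Fin n) → ℝ) (g : Equiv.Perm (Fin n)) :
    ∑ h : Equiv.Perm (Fin n), f (g * h⁻¹) = ∑ h : Equiv.Perm (Fin n), f h := by
  have := Equiv.sum_comp ((Equiv.inv (Equiv.Perm (Fin n))).trans (Equiv.mulLeft g)) f
  simpa using this

lemma q_sum (j : Fin n) : ∑ g : Equiv.Perm (Fin n), q j g = 1 := by
  unfold q
  rw [Finset.sum_comm]
  have h1 : ∀ i : Fin n,
      (∑ g : Equiv.Perm (Fin n), if i ≤ j ∧ g = Equiv.swap i j then 1 / (((j : ℕ) : ℝ) + 1) else 0)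
      = if i ≤ j then 1 / (((j : ℕ) : ℝ) + 1) else 0 := by
    intro i
    simp [ite_and]
  rw [Finset.sum_congr rfl fun i _ => h1 i]
  rw [Finset.sum_ite, Finset.sum_const, Finset.sum_const]
  have hcard : (Finset.univ.filter (fun i : Fin n => i ≤ j)) = Finset.Iic j := by
    ext i; simp
  rw [hcard, Fin.card_Iic]
  have : (((j : ℕ) : ℝ) + 1) ≠ 0 := by positivity
  simp only [nsmul_eq_mul, smul_zero, add_zero, Nat.cast_add, Nat.cast_one]
  field_simp

lemma convol_assoc (P Q R : Equiv.Perm (Fin n) → ℝ) :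
    convol (convol P Q) R = convol P (convol Q R) := by
  funext g
  have step1 : convol (convol P Q) R g
      = ∑ x : Equiv.Perm (Fin n), ∑ m : Equiv.Perm (Fin n),
          P (g * x⁻¹ * m⁻¹) * (Q m * R x) := by
    unfold convol
    simp only [Finset.sum_mul, mul_assoc]
  have step2 : convol P (convol Q R) g
      = ∑ x : Equiv.Perm (Fin n), ∑ h : Equiv.Perm (Fin n),
          P (g * h⁻¹) * (Q (h * x⁻¹) * R x) := by
    unfold convol
    simp only [Finset.mul_sum]
    exact Finset.sum_comm
  rw [step1, step2]
  refine Finset.sum_congr rfl fun x _ => ?_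
  have := Equiv.sum_comp (Equiv.mulRight x)
    (fun h => P (g * h⁻¹) * (Q (h * x⁻¹) * R x))
  simp only [Equiv.coe_mulRight] at this
  rw [← this]
  refine Finset.sum_congr rfl fun m _ => ?_
  have e1 : g * (m * x)⁻¹ = g * x⁻¹ * m⁻¹ := by group
  have e2 : m * x * x⁻¹ = m := by group
  rw [e1, e2]

lemma swap_idA {i j k : Fin n} (hij : i ≠ j) (hik : i ≠ k) (hjk : j ≠ k) :
    Equiv.swap i j * Equiv.swap i k = Equiv.swap j k * Equiv.swap i j := by
  have h := Equiv.mul_swap_eq_swap_mul (Equiv.swap i j) i k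
  rwa [Equiv.swap_apply_left, Equiv.swap_apply_of_ne_of_ne hik.symm hjk.symm] at h

lemma swap_idB {i j k : Fin n} (hij : i ≠ j) (hik : i ≠ k) (hjk : j ≠ k) :
    Equiv.swap i j * Equiv.swap j k = Equiv.swap i k * Equiv.swap i j := by
  have h := Equiv.mul_swap_eq_swap_mul (Equiv.swap i j) j k
  rwa [Equiv.swap_apply_right, Equiv.swap_apply_of_ne_of_ne hik.symm hjk.symm] at h

lemma swap_idC {i j a b : Fin n} (hai : a ≠ i) (haj : a ≠ j) (hbi : b ≠ i) (hbj : b ≠ j) :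
    Equiv.swap i j * Equiv.swap a b = Equiv.swap a b * Equiv.swap i j := by
  have h := Equiv.mul_swap_eq_swap_mul (Equiv.swap a b) i j
  rw [Equiv.swap_apply_of_ne_of_ne hai.symm hbi.symm,
    Equiv.swap_apply_of_ne_of_ne haj.symm hbj.symm] at h
  exact h.symm

lemma qq_eval (j k : Fin n) (g : Equiv.Perm (Fin n)) :
    convol (q j) (q k) g = ∑ p : Fin n × Fin n,
      if p.1 ≤ j ∧ p.2 ≤ k ∧ g = Equiv.swap p.1 j * Equiv.swap p.2 k
      then (1 / (((j : ℕ) : ℝ) + 1)) * (1 / (((k : ℕ) : ℝ) + 1)) else 0 := by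
  have key : ∀ (i i' : Fin n), (∑ h : Equiv.Perm (Fin n),
      (if i ≤ j ∧ g * h⁻¹ = Equiv.swap i j then 1 / (((j : ℕ) : ℝ) + 1) else 0) *
        (if i' ≤ k ∧ h = Equiv.swap i' k then 1 / (((k : ℕ) : ℝ) + 1) else 0))
      = if i ≤ j ∧ i' ≤ k ∧ g = Equiv.swap i j * Equiv.swap i' k
          then (1 / (((j : ℕ) : ℝ) + 1)) * (1 / (((k : ℕ) : ℝ) + 1)) else 0 := by
    intro i i'
    have this1 : ∀ h : Equiv.Perm (Fin n),
        (if i ≤ j ∧ g * h⁻¹ = Equiv.swap i j then 1 / (((j : ℕ) : ℝ) + 1) else 0) *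
          (if i' ≤ k ∧ h = Equiv.swap i' k then 1 / (((k : ℕ) : ℝ) + 1) else 0)
        = if h = Equiv.swap i' k then
            (if i ≤ j ∧ i' ≤ k ∧ g = Equiv.swap i j * Equiv.swap i' k
              then (1 / (((j : ℕ) : ℝ) + 1)) * (1 / (((k : ℕ) : ℝ) + 1)) else 0)
          else 0 := by
      intro h
      by_cases hh : h = Equiv.swap i' k
      · subst hh
        have hg : g * (Equiv.swap i' k)⁻¹ = Equiv.swap i j ↔
            g = Equiv.swap i j * Equiv.swap i' k := by
          rw [Equiv.swap_inv]
          constructor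
          · intro hx
            have := congrArg (fun x => x * Equiv.swap i' k) hx
            simpa [mul_assoc] using this
          · intro hx; rw [hx]; simp [mul_assoc]
        by_cases h3 : g = Equiv.swap i j * Equiv.swap i' k
        · by_cases h1 : i ≤ j <;> by_cases h2 : i' ≤ k <;>
            simp [h1, h2, h3, hg.2 h3]
        · have hng : ¬ (g * (Equiv.swap i' k)⁻¹ = Equiv.swap i j) := fun hx => h3 (hg.1 hx)
          rw [Equiv.swap_inv] at hng
          simp [hng, h3]
      · simp [hh]
    rw [Finset.sum_congr rfl fun h _ => this1 h]
    simp
  have expand : convol (q j) (q k) g = ∑ h : Equiv.Perm (Fin n), ∑ i : Fin n, ∑ i' : Fin n,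
      (if i ≤ j ∧ g * h⁻¹ = Equiv.swap i j then 1 / (((j : ℕ) : ℝ) + 1) else 0) *
        (if i' ≤ k ∧ h = Equiv.swap i' k then 1 / (((k : ℕ) : ℝ) + 1) else 0) := by
    unfold convol q
    exact Finset.sum_congr rfl fun h _ => Finset.sum_mul_sum _ _ _ _
  rw [Fintype.sum_prod_type, expand, Finset.sum_comm]
  refine Finset.sum_congr rfl fun i _ => ?_
  rw [Finset.sum_comm]
  exact Finset.sum_congr rfl fun i' _ => key i i'



lemma q_comm_lt {j k : Fin n} (hjk : j < k) :
    convol (q j) (q k) = convol (q k) (q j) := by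
  funext g
  rw [qq_eval, qq_eval]
  set cj := 1 / (((j : ℕ) : ℝ) + 1) with hcj
  set ck := 1 / (((k : ℕ) : ℝ) + 1) with hck
  refine Finset.sum_nbij'
    (fun p : Fin n × Fin n =>
      if p.1 = j then (p.2, j)
      else if p.2 = p.1 then (j, p.1)
      else if p.2 = j then (p.1, p.1)
      else (p.2, p.1))
    (fun p : Fin n × Fin n =>
      if p.2 = j then (j, p.1)
      else if p.1 = j then (p.2, p.2)
      else if p.1 = p.2 then (p.2, j)
      else (p.2, p.1))
    (fun a _ => Finset.mem_univ _) (fun a _ => Finset.mem_univ _) ?_ ?_ ?_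
  · -- left inverse
    rintro ⟨i, i'⟩ -
    by_cases h1 : i = j
    · simp [h1]
    · by_cases h2 : i' = i
      · simp [h1, h2, Ne.symm h1]
      · by_cases h3 : i' = j
        · simp [h1, h2, h3, Ne.symm h1, Ne.symm h2]
        · simp [h1, h2, h3, Ne.symm h1, Ne.symm h2, Ne.symm h3]
  · -- right inverse
    rintro ⟨u, v⟩ -
    by_cases h1 : v = j
    · simp [h1]
    · by_cases h2 : u = j
      · simp [h1, h2, Ne.symm h1]
      · by_cases h3 : u = v
        · simp [h1, h2, h3, Ne.symm h1, Ne.symm h2]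
        · simp [h1, h2, h3, Ne.symm h1, Ne.symm h2, Ne.symm h3]
  · -- values
    rintro ⟨i, i'⟩ -
    by_cases h1 : i = j
    · simp only [if_pos h1]
      refine if_congr ?_ (mul_comm cj ck) rfl
      rw [h1, Equiv.swap_self]
      constructor
      · rintro ⟨-, h2, h3⟩
        exact ⟨h2, le_refl _, h3.trans (by rfl)⟩
      · rintro ⟨h2, -, h3⟩
        exact ⟨le_refl _, h2, h3.trans (by rfl)⟩
    · by_cases h2 : i' = i
      · simp only [if_neg h1, if_pos h2]
        refine if_congr ?_ (mul_comm cj ck) rfl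
        rw [h2]
        constructor
        · rintro ⟨ha, hb, hg⟩
          have hij : i < j := lt_of_le_of_ne ha h1
          have hik : i ≠ k := (hij.trans hjk).ne
          exact ⟨hjk.le, ha, by rw [hg, swap_idA h1 hik hjk.ne]⟩
        · rintro ⟨-, hb, hg⟩
          have hij : i < j := lt_of_le_of_ne hb h1
          have hik : i ≠ k := (hij.trans hjk).ne
          exact ⟨hb, (hij.trans hjk).le, by rw [hg, ← swap_idA h1 hik hjk.ne]⟩
      · by_cases h3 : i' = j
        · simp only [if_neg h1, if_neg h2, if_pos h3]
          refine if_congr ?_ (mul_comm cj ck) rfl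
          rw [h3]
          constructor
          · rintro ⟨ha, -, hg⟩
            have hij : i < j := lt_of_le_of_ne ha h1
            have hik : i ≠ k := (hij.trans hjk).ne
            exact ⟨(hij.trans hjk).le, ha, by rw [hg, swap_idB h1 hik hjk.ne]⟩
          · rintro ⟨-, hb, hg⟩
            have hij : i < j := lt_of_le_of_ne hb h1
            have hik : i ≠ k := (hij.trans hjk).ne
            exact ⟨hb, hjk.le, by rw [hg, ← swap_idB h1 hik hjk.ne]⟩
        · simp only [if_neg h1, if_neg h2, if_neg h3]
          refine if_congr ?_ (mul_comm cj ck) rfl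
          constructor
          · rintro ⟨ha, hb, hg⟩
            have hki : k ≠ i := (lt_of_le_of_lt ha hjk).ne'
            exact ⟨hb, ha, by rw [hg, swap_idC h2 h3 hki hjk.ne']⟩
          · rintro ⟨hb, ha, hg⟩
            have hki : k ≠ i := (lt_of_le_of_lt ha hjk).ne'
            exact ⟨ha, hb, by rw [hg, ← swap_idC h2 h3 hki hjk.ne']⟩

lemma q_comm (j k : Fin n) : convol (q j) (q k) = convol (q k) (q j) := by
  rcases lt_trichotomy j k with h | h | h
  · exact q_comm_lt h
  · rw [h]
  · exact (q_comm_lt h).symm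


noncomputable def wq (w : List (Fin n)) : Equiv.Perm (Fin n) → ℝ :=
  w.foldr (fun j f => convol (q j) f) (dd n)

lemma wq_nil : wq ([] : List (Fin n)) = dd n := rfl

lemma wq_cons (x : Fin n) (w : List (Fin n)) : wq (x :: w) = convol (q x) (wq w) := rfl

lemma wq_append (w₁ w₂ : List (Fin n)) :
    wq (w₁ ++ w₂) = w₁.foldr (fun j f => convol (q j) f) (wq w₂) :=
  List.foldr_append ..

lemma wq_perm {w₁ w₂ : List (Fin n)} (h : w₁.Perm w₂) : wq w₁ = wq w₂ := by
  induction h with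
  | nil => rfl
  | cons x _ ih => rw [wq_cons, wq_cons, ih]
  | swap x y l =>
      show convol (q y) (convol (q x) (wq l)) = convol (q x) (convol (q y) (wq l))
      rw [← convol_assoc, q_comm, convol_assoc]
  | trans _ _ ih1 ih2 => exact ih1.trans ih2

lemma convol_q_const (j : Fin n) (u : ℝ) :
    convol (q j) (fun _ => u) = fun _ => u := by
  funext g
  show ∑ h : Equiv.Perm (Fin n), q j (g * h⁻¹) * u = u
  rw [← Finset.sum_mul, sum_translate (q j) g, q_sum, one_mul]

lemma dd_eq_uu_one : dd n = uu n 1 := by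
  funext g
  unfold dd uu
  have key : (g = 1) ↔ (∀ m : Fin n, 1 ≤ (m : ℕ) → g m = m) := by
    constructor
    · rintro rfl m _; rfl
    · intro h
      refine Equiv.ext fun m => ?_
      have one_app : (1 : Equiv.Perm (Fin n)) m = m := rfl
      rw [one_app]
      rcases Nat.eq_zero_or_pos (m : ℕ) with hm | hm
      · by_contra hne
        have hgm : (1 : ℕ) ≤ ((g m : Fin n) : ℕ) := by
          rcases Nat.eq_zero_or_pos ((g m : Fin n) : ℕ) with h0 | h1
          · exact absurd (Fin.ext (by omega) : g m = m) hne
          · exact h1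
        exact hne (g.injective (h (g m) hgm))
      · exact h m hm
  rcases Classical.em (g = 1) with h | h
  · simp [h, key.1 h, Nat.factorial]
  · simp [h, (not_iff_not.2 key).1 h]

lemma conv_step (k : Fin n) :
    convol (q k) (uu n (k : ℕ)) = uu n ((k : ℕ) + 1) := by
  funext σ
  set K := (k : ℕ) with hK
  by_cases hσ : ∀ m : Fin n, K + 1 ≤ (m : ℕ) → σ m = m
  · have hi0 : ((σ k : Fin n) : ℕ) ≤ K := by
      by_contra hgt
      push_neg at hgt
      have h1 : σ (σ k) = σ k := hσ _ hgt
      have h2 : σ k = k := σ.injective h1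
      rw [h2] at hgt
      omega
    set h₀ : Equiv.Perm (Fin n) := Equiv.swap (σ k) k * σ with hh₀def
    have hh₀ : ∀ m : Fin n, K ≤ (m : ℕ) → h₀ m = m := by
      intro m hm
      by_cases hmk : m = k
      · subst hmk
        show Equiv.swap (σ m) m (σ m) = m
        exact Equiv.swap_apply_left _ _
      · have hmK : K + 1 ≤ (m : ℕ) := by
          rcases Nat.lt_or_ge K (m : ℕ) with h | h
          · omega
          · exfalso; exact hmk (Fin.ext (by omega))
        have hσm : σ m = m := hσ m hmK
        show Equiv.swap (σ k) k (σ m) = m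
        rw [hσm]
        refine Equiv.swap_apply_of_ne_of_ne ?_ ?_
        · intro he; rw [← he] at hi0; omega
        · exact hmk
    have main : ∀ h : Equiv.Perm (Fin n), h ≠ h₀ → q k (σ * h⁻¹) * uu n K h = 0 := by
      intro h hne
      by_cases hG : ∀ m : Fin n, K ≤ (m : ℕ) → h m = m
      · have : q k (σ * h⁻¹) = 0 := by
          refine Finset.sum_eq_zero fun i _ => ?_
          rw [if_neg]
          rintro ⟨hik, hsw⟩
          have hσeq : σ = Equiv.swap i k * h := by
            have := congrArg (fun x => x * h) hsw
            simpa [mul_assoc] using this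
          have hhk : h k = k := hG k (le_refl K)
          have hσk : σ k = i := by rw [hσeq]; show Equiv.swap i k (h k) = i
                                   rw [hhk]; exact Equiv.swap_apply_right i k
          apply hne
          rw [hh₀def, hσk, hσeq, ← mul_assoc, Equiv.swap_mul_self, one_mul]
        rw [this, zero_mul]
      · have : uu n K h = 0 := by unfold uu; rw [if_neg hG]
        rw [this, mul_zero]
    rw [show convol (q k) (uu n K) σ = ∑ h : Equiv.Perm (Fin n), q k (σ * h⁻¹) * uu n K h
          from rfl,
        Fintype.sum_eq_single h₀ main]
    have hσinv : σ * h₀⁻¹ = Equiv.swap (σ k) k := by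
      rw [hh₀def, mul_inv_rev, ← mul_assoc, mul_inv_cancel, one_mul, Equiv.swap_inv]
    have hq : q k (σ * h₀⁻¹) = 1 / ((K : ℝ) + 1) := by
      rw [hσinv]
      unfold q
      have hz : ∀ i : Fin n, i ≠ σ k →
          (if i ≤ k ∧ Equiv.swap (σ k) k = Equiv.swap i k
            then 1 / (((k : ℕ) : ℝ) + 1) else 0) = 0 := by
        intro i hi
        rw [if_neg]
        rintro ⟨-, hsw⟩
        have := congrArg (fun τ : Equiv.Perm (Fin n) => τ k) hsw
        simp only [Equiv.swap_apply_right] at this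
        exact hi this.symm
      rw [Fintype.sum_eq_single (σ k) hz,
        if_pos ⟨Fin.le_def.mpr hi0, rfl⟩]
    have huu : uu n K h₀ = 1 / (Nat.factorial K : ℝ) := by
      unfold uu; rw [if_pos hh₀]
    rw [hq, huu]
    unfold uu
    rw [if_pos hσ, Nat.factorial_succ]
    push_cast
    have hK1 : ((K : ℝ) + 1) ≠ 0 := by positivity
    have hKf : (Nat.factorial K : ℝ) ≠ 0 := by
      exact_mod_cast Nat.factorial_ne_zero K
    field_simp
  · have hz : uu n (K + 1) σ = 0 := by unfold uu; rw [if_neg hσ]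
    rw [hz]
    refine Finset.sum_eq_zero fun h _ => ?_
    by_cases hG : ∀ m : Fin n, K ≤ (m : ℕ) → h m = m
    · have : q k (σ * h⁻¹) = 0 := by
        refine Finset.sum_eq_zero fun i _ => ?_
        rw [if_neg]
        rintro ⟨hik, hsw⟩
        have hσeq : σ = Equiv.swap i k * h := by
          have := congrArg (fun x => x * h) hsw
          simpa [mul_assoc] using this
        apply hσ
        intro m hm
        have hhm : h m = m := hG m (by omega)
        have hmk : m ≠ k := by intro he; rw [he] at hm; omega
        have hmi : m ≠ i := by
          intro he
          have : (i : ℕ) ≤ K := Fin.le_def.mp hik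
          rw [← he] at this; omega
        rw [hσeq]
        show Equiv.swap i k (h m) = m
        rw [hhm]
        exact Equiv.swap_apply_of_ne_of_ne hmi hmk
      rw [this, zero_mul]
    · have : uu n K h = 0 := by unfold uu; rw [if_neg hG]
      rw [this, mul_zero]


lemma chain_exists : ∀ K : ℕ, 1 ≤ K → K ≤ n →
    ∃ d : List (Fin n), d.Nodup ∧ (∀ x : Fin n, x ∈ d ↔ 1 ≤ (x : ℕ) ∧ (x : ℕ) < K) ∧
      wq d = uu n K := by
  intro K
  induction K with
  | zero => omega
  | succ K ih =>
    intro h1 hKn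
    rcases Nat.eq_zero_or_pos K with hK0 | hK1
    · subst hK0
      refine ⟨[], List.nodup_nil, ?_, ?_⟩
      · intro x; simp; omega
      · rw [wq_nil, dd_eq_uu_one]
    · obtain ⟨d, hnd, hmem, hwq⟩ := ih hK1 (by omega)
      have hKn' : K < n := by omega
      set kk : Fin n := ⟨K, hKn'⟩ with hkk
      refine ⟨kk :: d, ?_, ?_, ?_⟩
      · refine List.nodup_cons.mpr ⟨?_, hnd⟩
        intro hin
        have := (hmem kk).1 hin
        simp [hkk] at this
      · intro x
        simp only [List.mem_cons, hmem]
        constructor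
        · rintro (rfl | h)
          · simp [hkk]; omega
          · omega
        · rintro ⟨hx1, hx2⟩
          rcases Nat.lt_or_ge (x : ℕ) K with h | h
          · exact Or.inr ⟨hx1, h⟩
          · left
            apply Fin.ext
            simp [hkk]
            omega
      · rw [wq_cons, hwq]
        have : (kk : ℕ) = K := rfl
        rw [← this, conv_step kk]

lemma uu_top (hn : 1 ≤ n) : uu n n = fun _ => 1 / (Nat.factorial n : ℝ) := by
  funext σ
  unfold uu
  rw [if_pos]
  intro m hm
  exact absurd m.isLt (by omega)

lemma exists_perm_append {α : Type*} [DecidableEq α] :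
    ∀ (d w : List α), d.Nodup → (∀ x ∈ d, x ∈ w) → ∃ r, w.Perm (r ++ d) := by
  intro d
  induction d with
  | nil => intro w _ _; exact ⟨w, by simp⟩
  | cons x d' ih =>
    intro w hnd hsub
    have hx : x ∈ w := hsub x List.mem_cons_self
    have hnd' : d'.Nodup := (List.nodup_cons.mp hnd).2
    have hxd' : x ∉ d' := (List.nodup_cons.mp hnd).1
    have hsub' : ∀ y ∈ d', y ∈ w.erase x := by
      intro y hy
      have hyx : y ≠ x := fun he => hxd' (he ▸ hy)
      exact (List.mem_erase_of_ne hyx).mpr (hsub y (List.mem_cons_of_mem x hy))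
    obtain ⟨r, hr⟩ := ih (w.erase x) hnd' hsub'
    refine ⟨r, ?_⟩
    exact ((List.perm_cons_erase hx).trans (hr.cons x)).trans List.perm_middle.symm

lemma foldr_const (r : List (Fin n)) (u : ℝ) :
    r.foldr (fun j f => convol (q j) f) (fun _ => u) = fun _ => u := by
  induction r with
  | nil => rfl
  | cons x r ih => rw [List.foldr_cons, ih, convol_q_const]

lemma wq_covering (hn : 1 ≤ n) {w : List (Fin n)}
    (hw : ∀ x : Fin n, (x : ℕ) ≠ 0 → x ∈ w) :
    wq w = fun _ => 1 / (Nat.factorial n : ℝ) := by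
  obtain ⟨d, hnd, hmem, hwq⟩ := chain_exists n hn le_rfl
  have hsub : ∀ x ∈ d, x ∈ w := by
    intro x hx
    have := (hmem x).1 hx
    exact hw x (by omega)
  obtain ⟨r, hr⟩ := exists_perm_append d w hnd hsub
  rw [wq_perm hr, wq_append, hwq, uu_top hn, foldr_const]

lemma wq_nonneg (w : List (Fin n)) (g : Equiv.Perm (Fin n)) : 0 ≤ wq w g := by
  induction w generalizing g with
  | nil => unfold wq dd; dsimp; split <;> norm_num
  | cons x w ih =>
    rw [wq_cons]
    exact convol_nonneg (q_nonneg x) (fun g => ih g) g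


noncomputable def OSTbfull (n : ℕ) (α : ℝ) : Equiv.Perm (Fin n) → ℝ := fun σ =>
  ∑ j : Fin n, ∑ i : Fin n,
    if i ≤ j ∧ σ = Equiv.swap i j then (((j : ℕ) : ℝ) + 1) ^ (α - 1) / Nalpha α n else 0

/-- the weight of right hand `j`. -/
noncomputable def pc (n : ℕ) (α : ℝ) (j : Fin n) : ℝ :=
  (((j : ℕ) : ℝ) + 1) ^ α / Nalpha α n

lemma OSTbfull_eq (α : ℝ) :
    OSTbfull n α = fun σ => ∑ j : Fin n, pc n α j * q j σ := by
  funext σ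
  unfold OSTbfull pc q
  refine Finset.sum_congr rfl fun j _ => ?_
  rw [Finset.mul_sum]
  refine Finset.sum_congr rfl fun i _ => ?_
  rw [mul_ite, mul_zero]
  refine if_congr Iff.rfl ?_ rfl
  have hj : (0 : ℝ) < ((j : ℕ) : ℝ) + 1 := by positivity
  rw [Real.rpow_sub hj, Real.rpow_one]
  field_simp

lemma convol_sum_left {ι : Type*} (s : Finset ι) (F : ι → Equiv.Perm (Fin n) → ℝ)
    (Q : Equiv.Perm (Fin n) → ℝ) :
    convol (fun g => ∑ i ∈ s, F i g) Q = fun g => ∑ i ∈ s, convol (F i) Q g := by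
  funext g
  unfold convol
  rw [Finset.sum_comm]
  exact Finset.sum_congr rfl fun h _ => Finset.sum_mul ..

lemma convol_sum_right {ι : Type*} (s : Finset ι) (P : Equiv.Perm (Fin n) → ℝ)
    (F : ι → Equiv.Perm (Fin n) → ℝ) :
    convol P (fun g => ∑ i ∈ s, F i g) = fun g => ∑ i ∈ s, convol P (F i) g := by
  funext g
  unfold convol
  rw [Finset.sum_comm]
  exact Finset.sum_congr rfl fun h _ => Finset.mul_sum ..

lemma convol_mul_left (c : ℝ) (P Q : Equiv.Perm (Fin n) → ℝ) :
    convol (fun g => c * P g) Q = fun g => c * convol P Q g := by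
  funext g
  unfold convol
  rw [Finset.mul_sum]
  exact Finset.sum_congr rfl fun h _ => by ring

lemma convol_mul_right (c : ℝ) (P Q : Equiv.Perm (Fin n) → ℝ) :
    convol P (fun g => c * Q g) = fun g => c * convol P Q g := by
  funext g
  unfold convol
  rw [Finset.mul_sum]
  exact Finset.sum_congr rfl fun h _ => by ring

lemma expand (α : ℝ) (t : ℕ) :
    convPow (OSTbfull n α) t = fun g => ∑ f : Fin t → Fin n,
      (∏ i, pc n α (f i)) * wq (List.ofFn f) g := by
  induction t with
  | zero =>
    funext g
    haveI : Unique (Fin 0 → Fin n) := ⟨⟨fun i => i.elim0⟩, fun f => funext fun i => i.elim0⟩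
    rw [show convPow (OSTbfull n α) 0 = dd n from rfl]
    rw [Fintype.sum_unique]
    simp only [Finset.univ_eq_empty, Finset.prod_empty, one_mul]
    rw [show List.ofFn (default : Fin 0 → Fin n) = [] from List.ofFn_zero, wq_nil]
  | succ t ih =>
    have step : convPow (OSTbfull n α) (t + 1) = convol (OSTbfull n α)
        (convPow (OSTbfull n α) t) := rfl
    rw [step, ih, OSTbfull_eq α]
    rw [convol_sum_left]
    funext g
    have inner : ∀ j : Fin n,
        convol (fun g' => pc n α j * q j g')
          (fun g' => ∑ f : Fin t → Fin n, (∏ i, pc n α (f i)) * wq (List.ofFn f) g') g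
        = ∑ f : Fin t → Fin n,
            (pc n α j * ∏ i, pc n α (f i)) * convol (q j) (wq (List.ofFn f)) g := by
      intro j
      rw [convol_mul_left, convol_sum_right]
      simp only []
      rw [Finset.mul_sum]
      refine Finset.sum_congr rfl fun f _ => ?_
      rw [convol_mul_right]
      ring
    rw [Finset.sum_congr rfl fun j _ => inner j]
    have reindex := Equiv.sum_comp (Fin.consEquiv (fun _ : Fin (t + 1) => Fin n))
      (fun f : Fin (t + 1) → Fin n => (∏ i, pc n α (f i)) * wq (List.ofFn f) g)
    rw [← reindex, Fintype.sum_prod_type]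
    refine Finset.sum_congr rfl fun j _ => Finset.sum_congr rfl fun f _ => ?_
    have e1 : (Fin.consEquiv (fun _ : Fin (t + 1) => Fin n)) (j, f) = Fin.cons j f := rfl
    rw [e1]
    have e2 : (∏ i, pc n α ((Fin.cons j f : Fin (t + 1) → Fin n) i)) = pc n α j * ∏ i, pc n α (f i) := by
      rw [Fin.prod_univ_succ]
      simp [Fin.cons_zero, Fin.cons_succ]
    have e3 : List.ofFn (Fin.cons j f : Fin (t + 1) → Fin n) = j :: List.ofFn f := by
      rw [List.ofFn_succ]
      simp [Fin.cons_zero, Fin.cons_succ]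
    rw [e2, e3, wq_cons]


lemma Nalpha_pos (α : ℝ) (hn : 1 ≤ n) : 0 < Nalpha α n := by
  unfold Nalpha
  refine Finset.sum_pos (fun j hj => ?_) ⟨1, by simp [hn]⟩
  have : 1 ≤ j := (Finset.mem_Icc.mp hj).1
  have : (0:ℝ) < (j:ℝ) := by exact_mod_cast this
  positivity

lemma pc_pos (α : ℝ) (hn : 1 ≤ n) (j : Fin n) : 0 < pc n α j := by
  unfold pc
  have h1 : (0:ℝ) < (((j : ℕ) : ℝ) + 1) ^ α := by positivity
  exact div_pos h1 (Nalpha_pos α hn)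

lemma pc_sum (α : ℝ) : ∑ j : Fin n, pc n α j = 1 ∨ n = 0 := by
  rcases Nat.eq_zero_or_pos n with h | h
  · exact Or.inr h
  left
  unfold pc
  rw [← Finset.sum_div]
  rw [div_eq_one_iff_eq (ne_of_gt (Nalpha_pos α h))]
  unfold Nalpha
  have h1 : Finset.Icc 1 n = Finset.Ico 1 (n + 1) := by
    rw [Finset.Ico_add_one_right_eq_Icc]
  rw [h1, Finset.sum_Ico_eq_sum_range]
  rw [Fin.sum_univ_eq_sum_range (fun i => (((i : ℕ) : ℝ) + 1) ^ α) n]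
  refine Finset.sum_congr (by rw [Nat.add_sub_cancel]) fun i _ => ?_
  push_cast
  rw [add_comm]

lemma pc_le_one (α : ℝ) (hn : 1 ≤ n) (j : Fin n) : pc n α j ≤ 1 := by
  unfold pc
  rw [div_le_one (Nalpha_pos α hn)]
  unfold Nalpha
  have hj : (j : ℕ) + 1 ∈ Finset.Icc 1 n := by
    simp only [Finset.mem_Icc]
    exact ⟨by omega, j.isLt⟩
  have := Finset.single_le_sum (f := fun m : ℕ => ((m : ℕ) : ℝ) ^ α)
    (fun m hm => by
      have : 1 ≤ m := (Finset.mem_Icc.mp hm).1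
      have : (0:ℝ) < (m:ℝ) := by exact_mod_cast this
      positivity) hj
  calc (((j : ℕ) : ℝ) + 1) ^ α = ((((j : ℕ) + 1 : ℕ)) : ℝ) ^ α := by push_cast; ring_nf
    _ ≤ _ := this

lemma lower_bound (α : ℝ) (hn : 1 ≤ n) (t : ℕ) (σ : Equiv.Perm (Fin n)) :
    (1 - ∑ j₀ ∈ Finset.univ.filter (fun j : Fin n => (j : ℕ) ≠ 0), (1 - pc n α j₀) ^ t)
      * (1 / (Nat.factorial n : ℝ)) ≤ convPow (OSTbfull n α) t σ := by
  classical
  set J := Finset.univ.filter (fun j : Fin n => (j : ℕ) ≠ 0) with hJ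
  set W : (Fin t → Fin n) → ℝ := fun f => ∏ i, pc n α (f i) with hW
  have hWpos : ∀ f, 0 < W f := fun f => Finset.prod_pos fun i _ => pc_pos α hn _
  set C : (Fin t → Fin n) → Prop := fun f => ∀ x : Fin n, (x : ℕ) ≠ 0 → ∃ i, f i = x
    with hC
  have hWsum : ∑ f : Fin t → Fin n, W f = 1 := by
    rw [hW, ← Fintype.piFinset_univ, ← Finset.prod_univ_sum]
    rcases pc_sum (n := n) α with h | h
    · rw [h, Finset.prod_const_one]
    · omega
  have havoid : ∀ j₀ : Fin n,
      ∑ f ∈ Fintype.piFinset (fun _ : Fin t => Finset.univ.erase j₀), W f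
        = (1 - pc n α j₀) ^ t := by
    intro j₀
    rw [hW, ← Finset.prod_univ_sum]
    have h1 : ∑ j ∈ Finset.univ.erase j₀, pc n α j = 1 - pc n α j₀ := by
      have h2 := Finset.sum_erase_add Finset.univ (pc n α) (Finset.mem_univ j₀)
      rcases pc_sum (n := n) α with h | h
      · rw [h] at h2; linarith
      · omega
    rw [Finset.prod_congr rfl fun i _ => h1, Finset.prod_const, Finset.card_univ,
      Fintype.card_fin]
  have hunion : ∑ f ∈ Finset.univ.filter (fun f => ¬ C f), W f
      ≤ ∑ j₀ ∈ J, (1 - pc n α j₀) ^ t := by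
    have step1 : ∀ f ∈ Finset.univ.filter (fun f => ¬ C f),
        W f ≤ ∑ j₀ ∈ J, (if ∀ i, f i ≠ j₀ then W f else 0) := by
      intro f hf
      have hnc : ¬ ∀ x : Fin n, (x : ℕ) ≠ 0 → ∃ i, f i = x := (Finset.mem_filter.mp hf).2
      push_neg at hnc
      obtain ⟨x, hx0, hxa⟩ := hnc
      have hxJ : x ∈ J := by rw [hJ]; simp [hx0]
      have hnn : ∀ j₀ ∈ J, 0 ≤ (if ∀ i, f i ≠ j₀ then W f else 0) := by
        intro j₀ _
        split
        · exact (hWpos f).le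
        · exact le_rfl
      have hs := Finset.single_le_sum hnn hxJ
      rwa [if_pos hxa] at hs
    calc ∑ f ∈ Finset.univ.filter (fun f => ¬ C f), W f
        ≤ ∑ f ∈ Finset.univ.filter (fun f => ¬ C f),
            ∑ j₀ ∈ J, (if ∀ i, f i ≠ j₀ then W f else 0) :=
          Finset.sum_le_sum step1
      _ ≤ ∑ f : Fin t → Fin n, ∑ j₀ ∈ J, (if ∀ i, f i ≠ j₀ then W f else 0) := by
          refine Finset.sum_le_sum_of_subset_of_nonneg (Finset.filter_subset _ _) ?_
          intro f _ _
          refine Finset.sum_nonneg fun j₀ _ => ?_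
          split
          · exact (hWpos f).le
          · exact le_rfl
      _ = ∑ j₀ ∈ J, ∑ f : Fin t → Fin n, (if ∀ i, f i ≠ j₀ then W f else 0) :=
          Finset.sum_comm
      _ = ∑ j₀ ∈ J, (1 - pc n α j₀) ^ t := by
          refine Finset.sum_congr rfl fun j₀ _ => ?_
          rw [← Finset.sum_filter]
          rw [show Finset.univ.filter (fun f : Fin t → Fin n => ∀ i, f i ≠ j₀)
              = Fintype.piFinset (fun _ : Fin t => Finset.univ.erase j₀) by
            ext f
            simp [Fintype.mem_piFinset]]
          exact havoid j₀
  have hsplit := Finset.sum_filter_add_sum_filter_not Finset.univ C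
    (fun f => W f * wq (List.ofFn f) σ)
  have hsplitW := Finset.sum_filter_add_sum_filter_not Finset.univ C W
  have hcov : ∀ f ∈ Finset.univ.filter C, W f * wq (List.ofFn f) σ
      = W f * (1 / (Nat.factorial n : ℝ)) := by
    intro f hf
    have hCf : C f := (Finset.mem_filter.mp hf).2
    have : wq (List.ofFn f) = fun _ => 1 / (Nat.factorial n : ℝ) := by
      refine wq_covering hn fun x hx => ?_
      obtain ⟨i, hi⟩ := hCf x hx
      rw [List.mem_ofFn]
      exact ⟨i, hi⟩
    rw [this]
  rw [expand α t]
  calc (1 - ∑ j₀ ∈ J, (1 - pc n α j₀) ^ t) * (1 / (Nat.factorial n : ℝ))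
      ≤ (∑ f ∈ Finset.univ.filter C, W f) * (1 / (Nat.factorial n : ℝ)) := by
        refine mul_le_mul_of_nonneg_right ?_ (by positivity)
        have : ∑ f ∈ Finset.univ.filter C, W f
            = 1 - ∑ f ∈ Finset.univ.filter (fun f => ¬ C f), W f := by
          rw [← hWsum, ← hsplitW]; ring
        rw [this]
        linarith [hunion]
    _ = ∑ f ∈ Finset.univ.filter C, W f * wq (List.ofFn f) σ := by
        rw [Finset.sum_mul]
        exact (Finset.sum_congr rfl hcov).symm
    _ ≤ ∑ f : Fin t → Fin n, W f * wq (List.ofFn f) σ := by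
        refine Finset.sum_le_sum_of_subset_of_nonneg (Finset.filter_subset _ _) ?_
        intro f _ _
        exact mul_nonneg (hWpos f).le (wq_nonneg _ σ)

end OSTaux

/-- Separation-distance upper bound for biased one-sided transposition shuffles with
`α ≤ 0`: for `n ≥ 1`, `c > 0`, and every `t ≥ (N_α(n)/n^α)(log n + c)`,
`sep(OST_{n,α}^t) ≤ e^{−c}`. -/
theorem ostb_sep_upper (α : ℝ) (hα : α ≤ 0) (n : ℕ) (hn : 1 ≤ n) (c : ℝ) (hc : 0 < c)
    (t : ℕ) (ht : Nalpha α n / (n : ℝ) ^ α * (Real.log n + c) ≤ (t : ℝ)) :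
    sepDist (convPow (OSTb n α) t) ≤ Real.exp (-c) := by
  classical
  have hOST : OSTb n α = OSTaux.OSTbfull n α := rfl
  have hn1 : (1 : ℝ) ≤ (n : ℝ) := by exact_mod_cast hn
  have hnpos : (0 : ℝ) < (n : ℝ) := by linarith
  have hN : 0 < Nalpha α n := OSTaux.Nalpha_pos α hn
  have hna : (0 : ℝ) < (n : ℝ) ^ α := Real.rpow_pos_of_pos hnpos α
  set β : ℝ := (n : ℝ) ^ α / Nalpha α n with hβ
  have hβpos : 0 < β := div_pos hna hN
  set L : ℝ := Real.log n + c with hL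
  have hLpos : 0 < L := by
    have := Real.log_nonneg hn1
    rw [hL]; linarith
  have htL : L ≤ (t : ℝ) * β := by
    have hid : Nalpha α n / (n : ℝ) ^ α * β = 1 := by
      rw [hβ]; field_simp
    calc L = Nalpha α n / (n : ℝ) ^ α * L * β := by
          rw [mul_comm (Nalpha α n / (n : ℝ) ^ α) L, mul_assoc, hid, mul_one]
      _ ≤ (t : ℝ) * β := mul_le_mul_of_nonneg_right ht hβpos.le
  -- bound each term of the sum
  set J := Finset.univ.filter (fun j : Fin n => (j : ℕ) ≠ 0) with hJ
  have hterm : ∀ j₀ ∈ J, (1 - OSTaux.pc n α j₀) ^ t ≤ Real.exp (-L) := by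
    intro j₀ _
    have hple : OSTaux.pc n α j₀ ≤ 1 := OSTaux.pc_le_one α hn j₀
    have hpge : β ≤ OSTaux.pc n α j₀ := by
      rw [hβ]
      unfold OSTaux.pc
      have hjn : ((j₀ : ℕ) : ℝ) + 1 ≤ (n : ℝ) := by
        have := j₀.isLt
        exact_mod_cast Nat.succ_le_of_lt this
      have hrr : (n : ℝ) ^ α ≤ (((j₀ : ℕ) : ℝ) + 1) ^ α :=
        Real.rpow_le_rpow_of_nonpos (by positivity) hjn hα
      exact div_le_div_of_nonneg_right hrr hN.le
    have h1 : (1 - OSTaux.pc n α j₀) ^ t ≤ Real.exp (-(OSTaux.pc n α j₀)) ^ t := by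
      refine pow_le_pow_left₀ (by linarith) ?_ t
      have := Real.add_one_le_exp (-(OSTaux.pc n α j₀))
      linarith
    have h2 : Real.exp (-(OSTaux.pc n α j₀)) ^ t = Real.exp ((t : ℝ) * -(OSTaux.pc n α j₀)) :=
      (Real.exp_nat_mul _ t).symm
    have h3 : Real.exp ((t : ℝ) * -(OSTaux.pc n α j₀)) ≤ Real.exp (-L) := by
      rw [Real.exp_le_exp]
      have : (t : ℝ) * β ≤ (t : ℝ) * OSTaux.pc n α j₀ :=
        mul_le_mul_of_nonneg_left hpge (Nat.cast_nonneg t)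
      nlinarith
    calc (1 - OSTaux.pc n α j₀) ^ t ≤ Real.exp (-(OSTaux.pc n α j₀)) ^ t := h1
      _ = Real.exp ((t : ℝ) * -(OSTaux.pc n α j₀)) := h2
      _ ≤ Real.exp (-L) := h3
  have hsumJ : ∑ j₀ ∈ J, (1 - OSTaux.pc n α j₀) ^ t ≤ Real.exp (-c) := by
    calc ∑ j₀ ∈ J, (1 - OSTaux.pc n α j₀) ^ t
        ≤ J.card • Real.exp (-L) := Finset.sum_le_card_nsmul J _ _ hterm
      _ = (J.card : ℝ) * Real.exp (-L) := nsmul_eq_mul _ _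
      _ ≤ (n : ℝ) * Real.exp (-L) := by
          refine mul_le_mul_of_nonneg_right ?_ (Real.exp_nonneg _)
          have h1 : J.card ≤ Fintype.card (Fin n) :=
            le_trans (Finset.card_filter_le _ _) (le_of_eq Finset.card_univ)
          rw [Fintype.card_fin] at h1
          exact_mod_cast h1
      _ = Real.exp (-c) := by
          rw [hL, neg_add, Real.exp_add, Real.exp_neg, Real.exp_log hnpos]
          field_simp
  -- conclude
  have hfac : (0 : ℝ) < (Nat.factorial n : ℝ) := by
    exact_mod_cast Nat.factorial_pos n
  refine ciSup_le fun σ => ?_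
  have hlb := OSTaux.lower_bound α hn t σ
  rw [← hOST] at hlb
  have hkey : 1 - Real.exp (-c) ≤ (Nat.factorial n : ℝ) * convPow (OSTb n α) t σ := by
    have h2 : (1 - ∑ j₀ ∈ J, (1 - OSTaux.pc n α j₀) ^ t) * (1 / (Nat.factorial n : ℝ))
        ≤ convPow (OSTb n α) t σ := hlb
    have h3 : (1 - Real.exp (-c)) * (1 / (Nat.factorial n : ℝ))
        ≤ convPow (OSTb n α) t σ := by
      refine le_trans (mul_le_mul_of_nonneg_right ?_ (by positivity)) h2
      linarith
    calc 1 - Real.exp (-c)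
        = ((1 - Real.exp (-c)) * (1 / (Nat.factorial n : ℝ))) * (Nat.factorial n : ℝ) := by
          field_simp
      _ ≤ convPow (OSTb n α) t σ * (Nat.factorial n : ℝ) :=
          mul_le_mul_of_nonneg_right h3 hfac.le
      _ = (Nat.factorial n : ℝ) * convPow (OSTb n α) t σ := mul_comm _ _
  linarith
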